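/- The integral of exp(-sec²(x)) over x from 0 to π/2 equals (π/2)·erfc(1). -/

import Mathlib

open Real MeasureTheory

noncomputable def erfc (x : ℝ) : ℝ := (2 / Real.sqrt π) * ∫ t in Set.Ioi x, Real.exp (-t ^ 2)

open Set Filter

-- exponential integral over Ioi 1
lemma exp_int {a : ℝ} (ha : 0 < a) :
    ∫ s in Ioi (1:ℝ), Real.exp (-(a*s)) = Real.exp (-a) / a := by
  have hderiv : ∀ x ∈ Ioi (1:ℝ),
      HasDerivAt (fun s => -Real.exp (-(a*s)) / a) (Real.exp (-(a*x))) x := by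
    intro x _
    have h1 : HasDerivAt (fun s : ℝ => -(a*s)) (-a) x := by
      simpa using ((hasDerivAt_id x).const_mul a).fun_neg
    have h2 := (h1.exp).fun_neg.div_const a
    refine h2.congr_deriv ?_
    field_simp
  have hint : IntegrableOn (fun s => Real.exp (-(a*s))) (Ioi (1:ℝ)) := by
    simpa [neg_mul] using exp_neg_integrableOn_Ioi 1 ha
  have htend : Tendsto (fun s => -Real.exp (-(a*s)) / a) atTop (nhds 0) := by
    have h3 : Tendsto (fun s : ℝ => -(a*s)) atTop atBot :=
      tendsto_neg_atBot_iff.mpr ((tendsto_const_mul_atTop_of_pos ha).mpr tendsto_id)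
    have := (Real.tendsto_exp_atBot.comp h3).neg.div_const a
    simpa using this
  have hcont : ContinuousWithinAt (fun s => -Real.exp (-(a*s)) / a) (Ici (1:ℝ)) 1 := by
    exact (Continuous.div_const (by continuity) a).continuousWithinAt
  have := integral_Ioi_of_hasDerivAt_of_tendsto hcont hderiv hint htend
  rw [this]
  field_simp
  ring

-- gaussian on Ioi 0
lemma gauss_int {s : ℝ} (hs : 0 < s) :
    ∫ t in Ioi (0:ℝ), Real.exp (-(s*t^2)) = Real.sqrt (π/s) / 2 := by
  simpa [neg_mul] using integral_gaussian_Ioi s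

lemma sq_image : (fun u : ℝ => u^2) '' Ioi 1 = Ioi 1 := by
  ext s
  constructor
  · rintro ⟨u, hu, rfl⟩
    exact one_lt_pow₀ (mem_Ioi.mp hu) two_ne_zero
  · intro hs
    exact ⟨Real.sqrt s, by
      rw [mem_Ioi, show (1:ℝ) = Real.sqrt 1 by simp]
      exact Real.sqrt_lt_sqrt zero_le_one hs,
      by simp [Real.sq_sqrt (by linarith [mem_Ioi.mp hs] : (0:ℝ) ≤ s)]⟩

lemma subst_sq :
    ∫ s in Ioi (1:ℝ), Real.exp (-s) * (Real.sqrt (π/s) / 2)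
      = Real.sqrt π * ∫ u in Ioi (1:ℝ), Real.exp (-u^2) := by
  have h := integral_image_eq_integral_abs_deriv_smul (s := Ioi (1:ℝ))
    (f := fun u => u^2) (f' := fun u => 2*u) measurableSet_Ioi
    (fun x _ => (hasDerivAt_pow 2 x).hasDerivWithinAt.congr_deriv (by ring))
    (fun x hx y hy hxy => by
      have hx0 : (0:ℝ) ≤ x := by linarith [mem_Ioi.mp hx]
      have hy0 : (0:ℝ) ≤ y := by linarith [mem_Ioi.mp hy]
      have h2 : x^2 = y^2 := hxy
      nlinarith)
    (fun s => Real.exp (-s) * (Real.sqrt (π/s) / 2))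
  rw [sq_image] at h
  rw [h, ← integral_const_mul]
  apply setIntegral_congr_fun measurableSet_Ioi
  intro u hu
  have hu0 : (0:ℝ) < u := lt_trans one_pos (mem_Ioi.mp hu)
  have hsq : Real.sqrt (π / u^2) = Real.sqrt π / u := by
    rw [Real.sqrt_div Real.pi_pos.le, Real.sqrt_sq hu0.le]
  simp only [smul_eq_mul]
  rw [hsq, abs_of_pos (by positivity : (0:ℝ) < 2*u)]
  field_simp

lemma fubini_step :
    ∫ t in Ioi (0:ℝ), Real.exp (-(1+t^2)) / (1+t^2)
      = Real.sqrt π * ∫ u in Ioi (1:ℝ), Real.exp (-u^2) := by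
  have hpos : ∀ t : ℝ, (0:ℝ) < 1 + t^2 := fun t => by positivity
  -- rewrite integrand as inner integral
  have h1 : ∀ t : ℝ, Real.exp (-(1+t^2)) / (1+t^2)
      = ∫ s in Ioi (1:ℝ), Real.exp (-((1+t^2)*s)) := fun t => (exp_int (hpos t)).symm
  -- integrability on the product
  have hmeas : AEStronglyMeasurable (fun p : ℝ × ℝ => Real.exp (-((1+p.1^2)*p.2)))
      ((volume.restrict (Ioi (0:ℝ))).prod (volume.restrict (Ioi (1:ℝ)))) := by
    apply Continuous.aestronglyMeasurable
    continuity
  have hInt : Integrable (fun p : ℝ × ℝ => Real.exp (-((1+p.1^2)*p.2)))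
      ((volume.restrict (Ioi (0:ℝ))).prod (volume.restrict (Ioi (1:ℝ)))) := by
    rw [integrable_prod_iff hmeas]
    constructor
    · refine Filter.Eventually.of_forall fun t => ?_
      have h := exp_neg_integrableOn_Ioi 1 (hpos t)
      simp only [← neg_mul]
      exact h
    · have hg : IntegrableOn (fun t : ℝ => Real.exp (-t^2)) (Ioi (0:ℝ)) := by
        simpa [neg_mul] using
          (integrable_exp_neg_mul_sq (by norm_num : (0:ℝ) < 1)).integrableOn
      have heq : ∀ t : ℝ, (∫ s in Ioi (1:ℝ), ‖Real.exp (-((1+t^2)*s))‖)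
          = Real.exp (-(1+t^2)) / (1+t^2) := by
        intro t
        simp only [Real.norm_eq_abs, abs_of_pos (Real.exp_pos _)]
        exact exp_int (hpos t)
      have hcont : Continuous fun t : ℝ => Real.exp (-(1+t^2)) / (1+t^2) := by
        apply Continuous.div (by continuity) (by continuity)
        intro t; exact (hpos t).ne'
      have hclosed : Integrable (fun t : ℝ => Real.exp (-(1+t^2)) / (1+t^2))
          (volume.restrict (Ioi (0:ℝ))) := by
        refine Integrable.mono hg hcont.aestronglyMeasurable ?_
        refine Filter.Eventually.of_forall fun t => ?_
        rw [Real.norm_eq_abs, Real.norm_eq_abs, abs_of_pos (by positivity), abs_of_pos (Real.exp_pos _)]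
        have h2 : Real.exp (-(1+t^2)) ≤ Real.exp (-t^2) := by
          apply Real.exp_le_exp.mpr; nlinarith
        calc Real.exp (-(1+t^2)) / (1+t^2) ≤ Real.exp (-(1+t^2)) / 1 := by
              apply div_le_div_of_nonneg_left (Real.exp_pos _).le one_pos
              nlinarith
          _ ≤ Real.exp (-t^2) := by simpa using h2
      exact hclosed.congr (Filter.Eventually.of_forall fun t => (heq t).symm)
  calc ∫ t in Ioi (0:ℝ), Real.exp (-(1+t^2)) / (1+t^2)
      = ∫ t in Ioi (0:ℝ), ∫ s in Ioi (1:ℝ), Real.exp (-((1+t^2)*s)) := by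
        exact setIntegral_congr_fun measurableSet_Ioi fun t _ => h1 t
    _ = ∫ s in Ioi (1:ℝ), ∫ t in Ioi (0:ℝ), Real.exp (-((1+t^2)*s)) :=
        integral_integral_swap hInt
    _ = ∫ s in Ioi (1:ℝ), Real.exp (-s) * (Real.sqrt (π/s) / 2) := by
        apply setIntegral_congr_fun measurableSet_Ioi
        intro s hs
        have hs0 : (0:ℝ) < s := lt_trans one_pos (mem_Ioi.mp hs)
        have : ∀ t : ℝ, Real.exp (-((1+t^2)*s)) = Real.exp (-s) * Real.exp (-(s*t^2)) := by
          intro t; rw [← Real.exp_add]; ring_nf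
        simp only [this]
        rw [integral_const_mul, gauss_int hs0]
    _ = Real.sqrt π * ∫ u in Ioi (1:ℝ), Real.exp (-u^2) := subst_sq

lemma tan_image : Real.tan '' Ioo 0 (π/2) = Ioi (0:ℝ) := by
  ext y
  constructor
  · rintro ⟨x, hx, rfl⟩
    exact Real.tan_pos_of_pos_of_lt_pi_div_two hx.1 hx.2
  · intro hy
    refine ⟨Real.arctan y, ⟨?_, Real.arctan_lt_pi_div_two y⟩, Real.tan_arctan y⟩
    rw [← Real.arctan_zero]
    exact Real.arctan_strictMono hy

lemma tan_subst :
    ∫ x in Ioo (0:ℝ) (π/2), Real.exp (-(1/Real.cos x)^2)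
      = ∫ t in Ioi (0:ℝ), Real.exp (-(1+t^2)) / (1+t^2) := by
  have hsub : Ioo (0:ℝ) (π/2) ⊆ Ioo (-(π/2)) (π/2) := fun x hx =>
    ⟨lt_trans (by simpa using Real.pi_div_two_pos : -(π/2) < 0) hx.1, hx.2⟩
  have hcos : ∀ x ∈ Ioo (0:ℝ) (π/2), (0:ℝ) < Real.cos x := fun x hx =>
    Real.cos_pos_of_mem_Ioo (hsub hx)
  have h := integral_image_eq_integral_abs_deriv_smul (s := Ioo (0:ℝ) (π/2))
    (f := Real.tan) (f' := fun x => 1 / Real.cos x ^ 2) measurableSet_Ioo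
    (fun x hx => (Real.hasDerivAt_tan (hcos x hx).ne').hasDerivWithinAt)
    (Real.injOn_tan.mono hsub)
    (fun t => Real.exp (-(1+t^2)) / (1+t^2))
  rw [tan_image] at h
  rw [h]
  apply setIntegral_congr_fun measurableSet_Ioo
  intro x hx
  have hc := hcos x hx
  have htan : 1 + Real.tan x ^ 2 = 1 / Real.cos x ^ 2 := by
    rw [← Real.inv_one_add_tan_sq hc.ne']
    field_simp
  simp only [smul_eq_mul, htan]
  rw [abs_of_pos (by positivity : (0:ℝ) < 1 / Real.cos x ^ 2)]
  field_simp

theorem stmt_4 :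
    ∫ x in (0:ℝ)..(π / 2), Real.exp (-(1 / Real.cos x) ^ 2)
      = (π / 2) * erfc 1 := by
  have h0 : (0:ℝ) ≤ π/2 := by positivity
  rw [intervalIntegral.integral_of_le h0, integral_Ioc_eq_integral_Ioo,
    tan_subst, fubini_step, erfc]
  have hπ : (0:ℝ) < Real.sqrt π := Real.sqrt_pos.mpr Real.pi_pos
  have hsq : Real.sqrt π * Real.sqrt π = π := Real.mul_self_sqrt Real.pi_pos.le
  set I := ∫ (u : ℝ) in Ioi 1, Real.exp (-u ^ 2) with hI
  field_simp
  linear_combination I * hsq
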